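/- Let μ be a positive probability measure on ℂ supported in {|z| < r}. If R > (√2 + 1)·r, then the Cauchy transform C^μ is injective on the region {z : |z| > R}. -/

import Mathlib

open MeasureTheory Metric

lemma stmt4_aux_re_pos (a b : ℂ) (ha : ‖a‖ < Real.sqrt 2 - 1) (hb : ‖b‖ < Real.sqrt 2 - 1) :
    0 < (((1 - a) * (1 - b))⁻¹).re := by
  have h2 : Real.sqrt 2 * Real.sqrt 2 = 2 := Real.mul_self_sqrt (by norm_num)
  have hna : (0:ℝ) ≤ ‖a‖ := norm_nonneg a
  have hnb : (0:ℝ) ≤ ‖b‖ := norm_nonneg b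
  have hab : -(‖a‖ * ‖b‖) ≤ (a * b).re := by
    have h := Complex.abs_re_le_norm (a * b)
    rw [norm_mul] at h
    have := neg_le_of_abs_le h
    simpa using this
  have hra : a.re ≤ ‖a‖ := by simpa using Complex.re_le_norm a
  have hrb : b.re ≤ ‖b‖ := by simpa using Complex.re_le_norm b
  have hre : 0 < ((1 - a) * (1 - b)).re := by
    have e2 : (1 - a) * (1 - b) = 1 - a - b + a * b := by ring
    rw [e2]
    have e3 : (1 - a - b + a * b).re = 1 - a.re - b.re + (a * b).re := by simp
    rw [e3]
    have hprod : (1 + ‖a‖) * (1 + ‖b‖) < Real.sqrt 2 * Real.sqrt 2 :=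
      mul_lt_mul'' (by linarith) (by linarith) (by linarith) (by linarith)
    nlinarith
  have hu : (1 - a) * (1 - b) ≠ 0 := fun h => by simp [h] at hre
  rw [Complex.inv_re]
  exact div_pos hre (Complex.normSq_pos.mpr hu)

lemma stmt4_key (r R : ℝ) (hr : 0 < r) (hR : (Real.sqrt 2 + 1) * r < R)
    (z₁ z₂ y : ℂ) (h1 : R < ‖z₁‖) (h2 : R < ‖z₂‖) (hy : ‖y‖ < r) :
    0 < (z₁ * z₂ * ((z₁ - y) * (z₂ - y))⁻¹).re := by
  have h2' : Real.sqrt 2 * Real.sqrt 2 = 2 := Real.mul_self_sqrt (by norm_num)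
  have hs1 : 1 < Real.sqrt 2 := by nlinarith [Real.sqrt_nonneg 2]
  have hR0 : 0 < R := lt_trans (by nlinarith) hR
  have hz₁ : (0:ℝ) < ‖z₁‖ := lt_trans hR0 h1
  have hz₂ : (0:ℝ) < ‖z₂‖ := lt_trans hR0 h2
  have hz₁0 : z₁ ≠ 0 := by simpa [norm_pos_iff] using hz₁
  have hz₂0 : z₂ ≠ 0 := by simpa [norm_pos_iff] using hz₂
  have ha : ‖y / z₁‖ < Real.sqrt 2 - 1 := by
    rw [norm_div, div_lt_iff₀ hz₁]
    nlinarith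
  have hb : ‖y / z₂‖ < Real.sqrt 2 - 1 := by
    rw [norm_div, div_lt_iff₀ hz₂]
    nlinarith
  have key : z₁ * z₂ * ((z₁ - y) * (z₂ - y))⁻¹ = ((1 - y / z₁) * (1 - y / z₂))⁻¹ := by
    rw [show (1 - y / z₁) * (1 - y / z₂) = ((z₁ - y) * (z₂ - y)) / (z₁ * z₂) by
      field_simp]
    rw [inv_div, div_eq_mul_inv]
  rw [key]
  exact stmt4_aux_re_pos _ _ ha hb


open MeasureTheory Metric

theorem stmt_4 (r R : ℝ) (hr : 0 < r) (hR : (Real.sqrt 2 + 1) * r < R)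
    (μ : Measure ℂ) [IsProbabilityMeasure μ]
    (hsupp : μ (Metric.ball (0 : ℂ) r)ᶜ = 0) :
    Set.InjOn (fun z : ℂ => ∫ y, (z - y)⁻¹ ∂μ) {z : ℂ | R < ‖z‖} := by
  intro z₁ hz₁ z₂ hz₂ heq
  by_contra hne
  simp only [Set.mem_setOf_eq] at hz₁ hz₂
  have heq' : (∫ y, (z₁ - y)⁻¹ ∂μ) = ∫ y, (z₂ - y)⁻¹ ∂μ := heq
  have hs1 : 1 < Real.sqrt 2 := by
    nlinarith [Real.sqrt_nonneg 2, Real.mul_self_sqrt (show (0:ℝ) ≤ 2 by norm_num)]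
  have hRr : r < R := by nlinarith
  have hae : ∀ᵐ y ∂μ, ‖y‖ < r := by
    rw [ae_iff]
    convert hsupp using 2
    ext y
    simp [Metric.mem_ball, not_lt]
  -- lower bounds on denominators
  have hden : ∀ᵐ y ∂μ, R - r < ‖z₁ - y‖ ∧ R - r < ‖z₂ - y‖ := by
    filter_upwards [hae] with y hy
    constructor
    · calc R - r < ‖z₁‖ - ‖y‖ := by linarith
        _ ≤ ‖z₁ - y‖ := norm_sub_norm_le _ _
    · calc R - r < ‖z₂‖ - ‖y‖ := by linarith
        _ ≤ ‖z₂ - y‖ := norm_sub_norm_le _ _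
  have hRr0 : (0:ℝ) < R - r := by linarith
  -- integrability
  have hm1 : Measurable fun y : ℂ => (z₁ - y)⁻¹ :=
    (measurable_const.sub measurable_id).inv
  have hm2 : Measurable fun y : ℂ => (z₂ - y)⁻¹ :=
    (measurable_const.sub measurable_id).inv
  have hmg : Measurable fun y : ℂ => ((z₁ - y) * (z₂ - y))⁻¹ :=
    ((measurable_const.sub measurable_id).mul (measurable_const.sub measurable_id)).inv
  have hi1 : Integrable (fun y : ℂ => (z₁ - y)⁻¹) μ := by
    apply Integrable.mono' (integrable_const ((R - r)⁻¹)) hm1.aestronglyMeasurable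
    filter_upwards [hden] with y hy
    rw [norm_inv]
    exact inv_anti₀ hRr0 hy.1.le
  have hi2 : Integrable (fun y : ℂ => (z₂ - y)⁻¹) μ := by
    apply Integrable.mono' (integrable_const ((R - r)⁻¹)) hm2.aestronglyMeasurable
    filter_upwards [hden] with y hy
    rw [norm_inv]
    exact inv_anti₀ hRr0 hy.2.le
  have hig : Integrable (fun y : ℂ => ((z₁ - y) * (z₂ - y))⁻¹) μ := by
    apply Integrable.mono' (integrable_const (((R - r) * (R - r))⁻¹)) hmg.aestronglyMeasurable
    filter_upwards [hden] with y hy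
    rw [norm_inv, norm_mul]
    exact inv_anti₀ (mul_pos hRr0 hRr0)
      (mul_le_mul hy.1.le hy.2.le hRr0.le (norm_nonneg _))
  -- the difference identity
  have hdiff : (fun y : ℂ => (z₁ - y)⁻¹ - (z₂ - y)⁻¹)
      =ᵐ[μ] fun y => (z₂ - z₁) • ((z₁ - y) * (z₂ - y))⁻¹ := by
    filter_upwards [hden] with y hy
    have h1 : z₁ - y ≠ 0 := by
      intro h; rw [h, norm_zero] at hy; linarith [hy.1]
    have h2 : z₂ - y ≠ 0 := by
      intro h; rw [h, norm_zero] at hy; linarith [hy.2]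
    rw [smul_eq_mul]
    field_simp
    ring
  have h0 : (z₂ - z₁) • (∫ y, ((z₁ - y) * (z₂ - y))⁻¹ ∂μ) = 0 := by
    rw [← integral_smul, ← integral_congr_ae hdiff, integral_sub hi1 hi2, heq', sub_self]
  have hgz : (∫ y, ((z₁ - y) * (z₂ - y))⁻¹ ∂μ) = 0 := by
    rcases smul_eq_zero.mp h0 with h | h
    · exact absurd (sub_eq_zero.mp h).symm hne
    · exact h
  -- positivity contradiction
  have hig2 : Integrable (fun y : ℂ => z₁ * z₂ * ((z₁ - y) * (z₂ - y))⁻¹) μ :=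
    hig.const_mul _
  have hpos : ∀ᵐ y ∂μ, 0 < (z₁ * z₂ * ((z₁ - y) * (z₂ - y))⁻¹).re := by
    filter_upwards [hae] with y hy
    exact stmt4_key r R hr hR z₁ z₂ y hz₁ hz₂ hy
  have hire : Integrable (fun y : ℂ => (z₁ * z₂ * ((z₁ - y) * (z₂ - y))⁻¹).re) μ := by
    simpa using hig2.re
  have hieq : (∫ y, (z₁ * z₂ * ((z₁ - y) * (z₂ - y))⁻¹).re ∂μ) = 0 := by
    have := integral_re hig2
    simp only [RCLike.re_to_complex] at this
    rw [this, integral_const_mul, hgz, mul_zero, Complex.zero_re]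
  have hμ : μ ≠ 0 := IsProbabilityMeasure.ne_zero μ
  haveI := ae_neBot.mpr hμ
  have hsup : 0 < μ (Function.support fun y : ℂ => (z₁ * z₂ * ((z₁ - y) * (z₂ - y))⁻¹).re) := by
    by_contra h
    push_neg at h
    have h0' : μ (Function.support fun y : ℂ => (z₁ * z₂ * ((z₁ - y) * (z₂ - y))⁻¹).re) = 0 :=
      le_antisymm (by simpa using h) zero_le
    have hz : ∀ᵐ y ∂μ, (z₁ * z₂ * ((z₁ - y) * (z₂ - y))⁻¹).re = 0 := by
      rw [ae_iff]
      simpa [Function.support] using h0'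
    obtain ⟨y, hy1, hy2⟩ := (hz.and hpos).exists
    rw [hy1] at hy2
    exact lt_irrefl 0 hy2
  have := (integral_pos_iff_support_of_nonneg_ae
    (hpos.mono fun y hy => hy.le) hire).mpr hsup
  rw [hieq] at this
  exact lt_irrefl 0 this
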